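/- Let F be the free group on generators x_1, …, x_q and let h ≥ 2. Then the second group homology of the free nilpotent group F/F_h with trivial coefficients ℤ is isomorphic, as an abelian group, to the lower central series quotient F_h/F_{h+1}: H₂(F/F_h; ℤ) ≅ F_h/F_{h+1}. -/

import Mathlib

noncomputable section

variable (G : Type*) [Group G]

/-- The second differential `d₂ : ℤ[G²] → ℤ[G]` of the inhomogeneous bar complex computing
group homology with trivial coefficients `ℤ`: `d₂(g, h) = (h) - (gh) + (g)`. -/
def barD2 : ((Fin 2 → G) →₀ ℤ) →ₗ[ℤ] ((Fin 1 → G) →₀ ℤ) :=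
  Finsupp.lift _ ℤ _ fun g =>
    Finsupp.single ![g 1] 1 - Finsupp.single ![g 0 * g 1] 1 + Finsupp.single ![g 0] 1

/-- The third differential `d₃ : ℤ[G³] → ℤ[G²]` of the inhomogeneous bar complex computing
group homology with trivial coefficients `ℤ`:
`d₃(g, h, k) = (h, k) - (gh, k) + (g, hk) - (g, h)`. -/
def barD3 : ((Fin 3 → G) →₀ ℤ) →ₗ[ℤ] ((Fin 2 → G) →₀ ℤ) :=
  Finsupp.lift _ ℤ _ fun g =>
    Finsupp.single ![g 1, g 2] 1 - Finsupp.single ![g 0 * g 1, g 2] 1 +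
      Finsupp.single ![g 0, g 1 * g 2] 1 - Finsupp.single ![g 0, g 1] 1

/-- The second group homology of `G` with trivial coefficients `ℤ`, computed as
2-cycles modulo 2-boundaries of the inhomogeneous bar complex. -/
abbrev barH2 :=
  LinearMap.ker (barD2 G) ⧸
    (LinearMap.range (barD3 G)).comap (LinearMap.ker (barD2 G)).subtype

namespace Hopf

open scoped commutatorElement

lemma lift_single_one {M X : Type*} [AddCommGroup M] [Module ℤ M] (f : X → M) (a : X) :
    Finsupp.lift M ℤ X f (Finsupp.single a 1) = f a := by
  rw [Finsupp.lift_apply, Finsupp.sum_single_index]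
  · exact (Module.toDistribMulAction (R := ℤ) (M := M)).toMulAction.one_smul (f a)
  · exact Module.zero_smul (f a)

omit [Group G] in
lemma vec2_eta (a : Fin 2 → G) : a = ![a 0, a 1] := by
  funext i; fin_cases i <;> rfl

lemma barD2_single (g : Fin 2 → G) :
    barD2 G (Finsupp.single g 1) =
      Finsupp.single ![g 1] 1 - Finsupp.single ![g 0 * g 1] 1 + Finsupp.single ![g 0] 1 :=
  lift_single_one _ _

lemma barD3_single (g : Fin 3 → G) :
    barD3 G (Finsupp.single g 1) =
      Finsupp.single ![g 1, g 2] 1 - Finsupp.single ![g 0 * g 1, g 2] 1 +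
        Finsupp.single ![g 0, g 1 * g 2] 1 - Finsupp.single ![g 0, g 1] 1 :=
  lift_single_one _ _

/-- `V = C₂ / im d₃`. -/
abbrev BarV := ((Fin 2 → G) →₀ ℤ) ⧸ LinearMap.range (barD3 G)

variable {G}

/-- Class of the basis element `(g, g')` in `V`. -/
def B (g g' : G) : BarV G := Submodule.Quotient.mk (Finsupp.single ![g, g'] 1)

lemma B_rel (g₀ g₁ g₂ : G) :
    B g₁ g₂ - B (g₀ * g₁) g₂ + B g₀ (g₁ * g₂) - B g₀ g₁ = 0 := by
  have : (Submodule.Quotient.mk (barD3 G (Finsupp.single ![g₀, g₁, g₂] 1)) :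
      BarV G) = 0 := (Submodule.Quotient.mk_eq_zero _).2 ⟨_, rfl⟩
  rw [barD3_single] at this
  simpa [B, Matrix.cons_val_zero, Matrix.cons_val_one, Matrix.head_cons] using this

lemma B_one_one (g : G) : B 1 g = B 1 1 := by
  have := B_rel (1:G) 1 g
  simp only [one_mul] at this
  simpa [sub_self, zero_add, sub_eq_zero] using this


lemma B_rel' (g₀ g₁ g₂ : G) :
    B g₀ g₁ + B (g₀ * g₁) g₂ = B g₁ g₂ + B g₀ (g₁ * g₂) := by
  have h := B_rel g₀ g₁ g₂
  have : B g₁ g₂ + B g₀ (g₁ * g₂) - (B g₀ g₁ + B (g₀ * g₁) g₂) = 0 := by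
    rw [← h]; abel
  rw [sub_eq_zero] at this
  exact this.symm

lemma B_one_right (g : G) : B g 1 = B 1 1 := by
  have := B_rel' g 1 1
  simp only [mul_one, one_mul] at this
  exact add_right_cancel this

lemma B_one_left (g : G) : B 1 g = B 1 1 := by
  have := B_rel' 1 1 g
  simp only [mul_one, one_mul] at this
  exact (add_right_cancel this).symm

lemma B_inv (g : G) : B g⁻¹ g = B g g⁻¹ := by
  have := B_rel' g g⁻¹ g
  rw [mul_inv_cancel, inv_mul_cancel, B_one_left g, B_one_right g] at this
  exact (add_right_cancel this).symm

variable (G) in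
/-- The central extension `1 → V → M → G → 1` defined by the tautological 2-cocycle. -/
@[ext] structure BarM where
  g : G
  c : BarV G

instance : Group (BarM G) where
  mul m n := ⟨m.g * n.g, m.c + n.c + B m.g n.g⟩
  one := ⟨1, - B 1 1⟩
  inv m := ⟨m.g⁻¹, - m.c - B m.g m.g⁻¹ - B 1 1⟩
  mul_assoc a b c := by
    ext
    · exact mul_assoc _ _ _
    · show a.c + b.c + B a.g b.g + c.c + B (a.g * b.g) c.g
        = a.c + (b.c + c.c + B b.g c.g) + B a.g (b.g * c.g)
      have := B_rel' a.g b.g c.g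
      calc a.c + b.c + B a.g b.g + c.c + B (a.g * b.g) c.g
          = a.c + b.c + c.c + (B a.g b.g + B (a.g * b.g) c.g) := by abel
        _ = a.c + b.c + c.c + (B b.g c.g + B a.g (b.g * c.g)) := by rw [this]
        _ = a.c + (b.c + c.c + B b.g c.g) + B a.g (b.g * c.g) := by abel
  one_mul a := by
    ext
    · exact one_mul _
    · show - B 1 1 + a.c + B 1 a.g = a.c
      rw [B_one_left a.g]; abel
  mul_one a := by
    ext
    · exact mul_one _
    · show a.c + - B 1 1 + B a.g 1 = a.c
      rw [B_one_right a.g]; abel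
  inv_mul_cancel a := by
    ext
    · exact inv_mul_cancel _
    · show (- a.c - B a.g a.g⁻¹ - B 1 1) + a.c + B a.g⁻¹ a.g = - B 1 1
      rw [B_inv]; abel

lemma BarM.mul_def (a b : BarM G) : a * b = ⟨a.g * b.g, a.c + b.c + B a.g b.g⟩ := rfl
lemma BarM.one_def : (1 : BarM G) = ⟨1, - B 1 1⟩ := rfl
lemma BarM.inv_def (a : BarM G) : a⁻¹ = ⟨a.g⁻¹, - a.c - B a.g a.g⁻¹ - B 1 1⟩ := rfl

/-- Elements with trivial `G`-component are central. -/
lemma BarM.central (d : BarV G) (m : BarM G) :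
    (⟨1, d⟩ : BarM G) * m = m * ⟨1, d⟩ := by
  rw [BarM.mul_def, BarM.mul_def]
  ext
  · simp
  · show d + m.c + B 1 m.g = m.c + d + B m.g 1
    rw [B_one_left m.g, B_one_right m.g]; abel

/-- The projection `M → G`. -/
def BarM.fst : BarM G →* G :=
  MonoidHom.mk' (fun m => m.g) (fun _ _ => rfl)

variable (G) in
/-- `d₂` descends to `V`. -/
def Dbar : BarV G →ₗ[ℤ] ((Fin 1 → G) →₀ ℤ) :=
  Submodule.liftQ _ (barD2 G) (by
    rintro x ⟨y, rfl⟩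
    rw [LinearMap.mem_ker]
    induction y using Finsupp.induction with
    | zero => simp
    | single_add a b f _ _ ih =>
        rw [map_add, map_add, ih, add_zero]
        have hb : (Finsupp.single a b : (Fin 3 → G) →₀ ℤ) = b • Finsupp.single a 1 := by
          rw [Finsupp.smul_single, smul_eq_mul, mul_one]
        rw [hb, map_smul, map_smul]
        rw [barD3_single, map_sub, map_add, map_sub, barD2_single, barD2_single,
          barD2_single, barD2_single]
        simp only [Matrix.cons_val_zero, Matrix.cons_val_one, Matrix.head_cons]
        rw [show a 0 * a 1 * a 2 = a 0 * (a 1 * a 2) from mul_assoc _ _ _]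
        have : (Finsupp.single ![a 2] 1 - Finsupp.single ![a 1 * a 2] 1 + Finsupp.single ![a 1] 1) -
            (Finsupp.single ![a 2] 1 - Finsupp.single ![a 0 * (a 1 * a 2)] 1 + Finsupp.single ![a 0 * a 1] 1) +
            (Finsupp.single ![a 1 * a 2] 1 - Finsupp.single ![a 0 * (a 1 * a 2)] 1 + Finsupp.single ![a 0] 1) -
            (Finsupp.single ![a 1] 1 - Finsupp.single ![a 0 * a 1] 1 + Finsupp.single ![a 0] 1)
            = (0 : (Fin 1 → G) →₀ ℤ) := by abel
        rw [this, smul_zero])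

lemma Dbar_mk (x : (Fin 2 → G) →₀ ℤ) :
    Dbar G (Submodule.Quotient.mk x) = barD2 G x := rfl

lemma Dbar_B (g g' : G) :
    Dbar G (B g g') = Finsupp.single ![g'] 1 - Finsupp.single ![g * g'] 1 + Finsupp.single ![g] 1 := by
  rw [B, Dbar_mk, barD2_single]
  simp

/-- The homomorphism `ν : M → ℤ[G]`, `(g, c) ↦ d₂(c) + [g]`. -/
def nuM : BarM G →* Multiplicative ((Fin 1 → G) →₀ ℤ) :=
  MonoidHom.mk' (fun m => Multiplicative.ofAdd (Dbar G m.c + Finsupp.single ![m.g] 1))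
    (by
      intro a b
      apply Multiplicative.toAdd.injective
      show Dbar G (a.c + b.c + B a.g b.g) + Finsupp.single ![a.g * b.g] 1
        = (Dbar G a.c + Finsupp.single ![a.g] 1) + (Dbar G b.c + Finsupp.single ![b.g] 1)
      rw [map_add, map_add, Dbar_B]
      abel)


section Free

variable {ι : Type*} (N : Subgroup (FreeGroup ι)) [N.Normal]

/-- The projection onto the quotient. -/
abbrev piN : FreeGroup ι →* FreeGroup ι ⧸ N := QuotientGroup.mk' N

/-- A set-theoretic section of `piN` sending `1` to `1`. -/
def sigma (g : FreeGroup ι ⧸ N) : FreeGroup ι :=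
  letI := Classical.dec (g = 1)
  if g = 1 then 1 else Quotient.out g

lemma sigma_spec (g : FreeGroup ι ⧸ N) : piN N (sigma N g) = g := by
  unfold sigma
  split
  · rename_i h; rw [map_one, h]
  · exact QuotientGroup.out_eq' g

lemma sigma_one : sigma N 1 = 1 := by
  unfold sigma; simp

lemma pi_eq_one_of_mem {r : FreeGroup ι} (hr : r ∈ N) : piN N r = 1 :=
  (QuotientGroup.eq_one_iff r).2 hr

lemma mem_of_pi_eq_one {r : FreeGroup ι} (hr : piN N r = 1) : r ∈ N :=
  (QuotientGroup.eq_one_iff r).1 hr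

/-- The canonical lift `F → M` through the central extension. -/
def psiM : FreeGroup ι →* BarM (FreeGroup ι ⧸ N) :=
  FreeGroup.lift fun i => ⟨piN N (FreeGroup.of i), 0⟩

lemma psiM_g (w : FreeGroup ι) : (psiM N w).g = piN N w := by
  have : BarM.fst.comp (psiM N) = piN N := by
    apply FreeGroup.ext_hom
    intro a
    show (psiM N (FreeGroup.of a)).g = piN N (FreeGroup.of a)
    rw [psiM, FreeGroup.lift_apply_of]
  exact DFunLike.congr_fun this w

/-- The `V`-component of `psiM`. -/
def tau (w : FreeGroup ι) : BarV (FreeGroup ι ⧸ N) := (psiM N w).c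

lemma tau_mul (u v : FreeGroup ι) :
    tau N (u * v) = tau N u + tau N v + B (piN N u) (piN N v) := by
  have h := map_mul (psiM N) u v
  have := congrArg BarM.c h
  rw [BarM.mul_def] at this
  simpa [tau, psiM_g] using this

lemma tau_one : tau N (1 : FreeGroup ι) = - B 1 1 := by
  have := congrArg BarM.c (map_one (psiM N))
  simpa [tau, BarM.one_def] using this

lemma tau_inv (w : FreeGroup ι) :
    tau N w⁻¹ = - tau N w - B (piN N w) (piN N w)⁻¹ - B 1 1 := by
  have := congrArg BarM.c (map_inv (psiM N) w)
  rw [BarM.inv_def] at this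
  simpa [tau, psiM_g] using this


lemma Dbar_tau_of_mem_commutator {r : FreeGroup ι} (hr : r ∈ commutator (FreeGroup ι))
    (hrN : r ∈ N) :
    Dbar (FreeGroup ι ⧸ N) (tau N r) = - Finsupp.single ![(1 : FreeGroup ι ⧸ N)] 1 := by
  have hker : commutator (FreeGroup ι) ≤ (nuM.comp (psiM N)).ker := by
    rw [commutator, Subgroup.commutator_le]
    intro a _ b _
    rw [MonoidHom.mem_ker, map_commutatorElement, commutatorElement_eq_one_iff_mul_comm]
    exact mul_comm _ _
  have h1 : nuM (psiM N r) = 1 := hker hr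
  have h2 := congrArg Multiplicative.toAdd h1
  have : Dbar (FreeGroup ι ⧸ N) (tau N r) + Finsupp.single ![piN N r] 1 = 0 := by
    simpa [nuM, tau, psiM_g] using h2
  rw [pi_eq_one_of_mem N hrN] at this
  rw [eq_neg_iff_add_eq_zero]
  exact this

lemma Dbar_cycle {r : FreeGroup ι} (hr : r ∈ commutator (FreeGroup ι)) (hrN : r ∈ N) :
    Dbar (FreeGroup ι ⧸ N) (tau N r + B 1 1) = 0 := by
  rw [map_add, Dbar_tau_of_mem_commutator N hr hrN, Dbar_B]
  simp

lemma psiM_eq_one_of_mem {x : FreeGroup ι} (hx : x ∈ ⁅N, (⊤ : Subgroup (FreeGroup ι))⁆) :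
    psiM N x = 1 := by
  have hker : ⁅N, (⊤ : Subgroup (FreeGroup ι))⁆ ≤ (psiM N).ker := by
    rw [Subgroup.commutator_le]
    intro a ha b _
    rw [MonoidHom.mem_ker, map_commutatorElement, commutatorElement_eq_one_iff_mul_comm]
    have hg : psiM N a = ⟨1, (psiM N a).c⟩ := by
      ext
      · rw [psiM_g]; exact pi_eq_one_of_mem N ha
      · rfl
    rw [hg]
    exact BarM.central _ _
  exact hker hx

lemma tau_of_mem_K {x : FreeGroup ι} (hx : x ∈ ⁅N, (⊤ : Subgroup (FreeGroup ι))⁆) :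
    tau N x = - B 1 1 := by
  rw [tau, psiM_eq_one_of_mem N hx, BarM.one_def]

instance commGroupQ : CommGroup (N ⧸ (⁅N, (⊤ : Subgroup (FreeGroup ι))⁆.subgroupOf N)) :=
  { (inferInstance : Group (N ⧸ (⁅N, (⊤ : Subgroup (FreeGroup ι))⁆.subgroupOf N))) with
    mul_comm := by
      intro a b
      induction a using QuotientGroup.induction_on
      induction b using QuotientGroup.induction_on
      rename_i x y
      show QuotientGroup.mk (x * y) = QuotientGroup.mk (y * x)
      rw [QuotientGroup.eq]
      have : (x * y)⁻¹ * (y * x) = ⁅y⁻¹, x⁻¹⁆ := by group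
      rw [this, Subgroup.mem_subgroupOf]
      have hcoe : ((⁅y⁻¹, x⁻¹⁆ : N) : FreeGroup ι) = ⁅(y⁻¹ : FreeGroup ι), (x⁻¹ : FreeGroup ι)⁆ := rfl
      rw [hcoe]
      exact Subgroup.commutator_mem_commutator (y⁻¹).2 (Subgroup.mem_top _) }


/-- `fσ(a,b) = σ(a)σ(b)σ(ab)⁻¹ ∈ N`. -/
def fsig (a b : FreeGroup ι ⧸ N) : FreeGroup ι :=
  sigma N a * sigma N b * (sigma N (a * b))⁻¹

lemma fsig_mem (a b : FreeGroup ι ⧸ N) : fsig N a b ∈ N := by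
  apply mem_of_pi_eq_one
  rw [fsig, map_mul, map_mul, map_inv, sigma_spec, sigma_spec, sigma_spec]
  group

lemma fsig_mul_sigma (a b : FreeGroup ι ⧸ N) :
    fsig N a b * sigma N (a * b) = sigma N a * sigma N b :=
  inv_mul_cancel_right _ _

lemma fsig_one_one : fsig N 1 1 = 1 := by
  simp [fsig, sigma_one]

/-- The quotient `Q = N/[F,N]` (as `[N,⊤] ≤ N` for normal `N`). -/
abbrev QN := N ⧸ (⁅N, (⊤ : Subgroup (FreeGroup ι))⁆.subgroupOf N)

/-- `P = F/[N,F]`. -/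
abbrev PN := FreeGroup ι ⧸ ⁅N, (⊤ : Subgroup (FreeGroup ι))⁆

abbrev prP : FreeGroup ι →* PN N := QuotientGroup.mk' ⁅N, (⊤ : Subgroup (FreeGroup ι))⁆

lemma prP_central {r : FreeGroup ι} (hr : r ∈ N) (p : PN N) :
    Commute (prP N r) p := by
  induction p using QuotientGroup.induction_on
  rename_i u
  show prP N r * prP N u = prP N u * prP N r
  rw [← map_mul, ← map_mul]
  apply QuotientGroup.eq.mpr
  rw [← Subgroup.inv_mem_iff]
  have : ((r * u)⁻¹ * (u * r))⁻¹ = ⁅r⁻¹, u⁻¹⁆ := by group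
  rw [this]
  exact Subgroup.commutator_mem_commutator (Subgroup.inv_mem N hr) (Subgroup.mem_top _)

/-- The injection `Q → P`. -/
def jQ : QN N →* PN N :=
  QuotientGroup.lift _ ((prP N).comp N.subtype)
    (fun x hx => (QuotientGroup.eq_one_iff _).2 (Subgroup.mem_subgroupOf.1 hx))

lemma jQ_mk (r : N) : jQ N (QuotientGroup.mk r) = prP N r.1 := rfl

lemma jQ_central (x : QN N) (p : PN N) : Commute (jQ N x) p := by
  induction x using QuotientGroup.induction_on
  rename_i r
  rw [jQ_mk]
  exact prP_central N r.2 p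

lemma jQ_inj : Function.Injective (jQ N) := by
  rw [injective_iff_map_eq_one]
  intro a ha
  induction a using QuotientGroup.induction_on
  rename_i r
  rw [jQ_mk] at ha
  rw [QuotientGroup.eq_one_iff]
  rw [Subgroup.mem_subgroupOf]
  exact (QuotientGroup.eq_one_iff _).1 ha

/-- The 2-chain-level Hopf map into `Q`. -/
def phi : ((Fin 2 → FreeGroup ι ⧸ N) →₀ ℤ) →ₗ[ℤ] Additive (QN N) :=
  Finsupp.lift _ ℤ _ fun g =>
    Additive.ofMul (QuotientGroup.mk (⟨fsig N (g 0) (g 1), fsig_mem N _ _⟩ : N))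

lemma phi_single (a b : FreeGroup ι ⧸ N) :
    phi N (Finsupp.single ![a, b] 1) =
      Additive.ofMul (QuotientGroup.mk (⟨fsig N a b, fsig_mem N a b⟩ : N)) := by
  rw [phi, lift_single_one]
  simp

lemma phi_kills_d3 : ∀ y, phi N (barD3 (FreeGroup ι ⧸ N) y) = 0 := by
  suffices h : (phi N).comp (barD3 (FreeGroup ι ⧸ N)) = 0 by
    intro y; exact DFunLike.congr_fun h y
  apply Finsupp.lhom_ext
  intro a b
  -- reduce to single a 1 scaled by b
  have hb : (Finsupp.single a b : (Fin 3 → FreeGroup ι ⧸ N) →₀ ℤ) = b • Finsupp.single a 1 := by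
    rw [Finsupp.smul_single, smul_eq_mul, mul_one]
  rw [LinearMap.comp_apply, hb, map_smul, map_smul]
  suffices h1 : phi N (barD3 (FreeGroup ι ⧸ N) (Finsupp.single a 1)) = 0 by
    simp [h1]
  rw [barD3_single, map_sub, map_add, map_sub]
  set q1 := Additive.ofMul (QuotientGroup.mk (⟨fsig N (a 1) (a 2), fsig_mem N _ _⟩ : N)) with hq1
  set q2 := Additive.ofMul (QuotientGroup.mk (⟨fsig N (a 0 * a 1) (a 2), fsig_mem N _ _⟩ : N)) with hq2
  set q3 := Additive.ofMul (QuotientGroup.mk (⟨fsig N (a 0) (a 1 * a 2), fsig_mem N _ _⟩ : N)) with hq3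
  set q4 := Additive.ofMul (QuotientGroup.mk (⟨fsig N (a 0) (a 1), fsig_mem N _ _⟩ : N)) with hq4
  rw [phi_single, phi_single, phi_single, phi_single, ← hq1, ← hq2, ← hq3, ← hq4]
  have key : q1 + q3 = q4 + q2 := by
    apply Additive.toMul.injective
    apply jQ_inj N
    show jQ N (QuotientGroup.mk _ * QuotientGroup.mk _) = jQ N (QuotientGroup.mk _ * QuotientGroup.mk _)
    rw [← QuotientGroup.mk_mul, ← QuotientGroup.mk_mul, jQ_mk, jQ_mk]
    show prP N (fsig N (a 1) (a 2) * fsig N (a 0) (a 1 * a 2))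
      = prP N (fsig N (a 0) (a 1) * fsig N (a 0 * a 1) (a 2))
    have hF : fsig N (a 0) (a 1) * fsig N (a 0 * a 1) (a 2)
        = sigma N (a 0) * (fsig N (a 1) (a 2) * ((sigma N (a 0))⁻¹ * fsig N (a 0) (a 1 * a 2))) := by
      rw [fsig, fsig, fsig, fsig, mul_assoc (a 0) (a 1) (a 2)]
      group
    rw [hF, map_mul, map_mul, map_mul, map_mul, map_inv]
    have hc : prP N (sigma N (a 0)) * prP N (fsig N (a 1) (a 2))
        = prP N (fsig N (a 1) (a 2)) * prP N (sigma N (a 0)) :=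
      ((prP_central N (fsig_mem N (a 1) (a 2)) _).eq).symm
    conv_rhs => rw [← mul_assoc, hc, mul_assoc, mul_inv_cancel_left]
  have : q1 + q3 - (q4 + q2) = 0 := sub_eq_zero.2 key
  calc q1 - q2 + q3 - q4 = q1 + q3 - (q4 + q2) := by abel
    _ = 0 := this


/-- `phi` descended to `V`. -/
def phiV : BarV (FreeGroup ι ⧸ N) →ₗ[ℤ] Additive (QN N) :=
  Submodule.liftQ _ (phi N) (by
    rintro x ⟨y, rfl⟩
    rw [LinearMap.mem_ker]
    exact phi_kills_d3 N y)

lemma phiV_mk (x : (Fin 2 → FreeGroup ι ⧸ N) →₀ ℤ) :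
    phiV N (Submodule.Quotient.mk x) = phi N x := rfl

lemma phiV_B (a b : FreeGroup ι ⧸ N) :
    phiV N (B a b) = Additive.ofMul (QuotientGroup.mk (⟨fsig N a b, fsig_mem N a b⟩ : N)) := by
  rw [B, phiV_mk, phi_single]

lemma phiV_B11 : phiV N (B 1 1) = 0 := by
  rw [phiV_B]
  have : (⟨fsig N 1 1, fsig_mem N 1 1⟩ : N) = 1 := Subtype.ext (fsig_one_one N)
  rw [this]
  simp

omit [Group G] in
lemma central_rearrange {Γ : Type*} [Group Γ] {s2 s t f u v : Γ}
    (hf : ∀ p, f * p = p * f) (hu : ∀ p, u * p = p * u)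
    (h : s2 * f = s * t) : s2 * (u * v * f) = (s * u) * (t * v) := by
  have e1 : u * v * f = f * (u * v) := (hf (u * v)).symm
  rw [e1, ← mul_assoc, h, mul_assoc s t, mul_assoc s u, ← mul_assoc t u v,
    ← hu t, mul_assoc u t v]

/-- `Θ : M → P`, `(g, c) ↦ σ(g)·j(φ(c))`. -/
def Theta : BarM (FreeGroup ι ⧸ N) →* PN N :=
  MonoidHom.mk' (fun m => prP N (sigma N m.g) * jQ N (Additive.toMul (phiV N m.c)))
    (by
      intro m n
      show prP N (sigma N (m.g * n.g)) * jQ N (Additive.toMul (phiV N (m.c + n.c + B m.g n.g)))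
        = (prP N (sigma N m.g) * jQ N (Additive.toMul (phiV N m.c))) *
          (prP N (sigma N n.g) * jQ N (Additive.toMul (phiV N n.c)))
      rw [map_add (phiV N), map_add (phiV N), phiV_B, toMul_add, toMul_add, toMul_ofMul,
        map_mul (jQ N), map_mul (jQ N), jQ_mk]
      exact central_rearrange (fun p => (prP_central N (fsig_mem N m.g n.g) p).eq)
        (fun p => (jQ_central N _ p).eq)
        (by rw [(prP_central N (fsig_mem N m.g n.g) _).eq.symm, ← map_mul, fsig_mul_sigma, map_mul]))

lemma Theta_psiM (w : FreeGroup ι) :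
    Theta N (psiM N w) = prP N (sigma N (piN N w)) * jQ N (Additive.toMul (phiV N (tau N w))) := by
  show prP N (sigma N ((psiM N w).g)) * _ = _
  rw [psiM_g]
  rfl

lemma cTilde_val (w : FreeGroup ι) :
    prP N w * (Theta N (psiM N w))⁻¹
      = (jQ N (Additive.toMul (phiV N (tau N w))))⁻¹ * prP N (w * (sigma N (piN N w))⁻¹) := by
  set jq := jQ N (Additive.toMul (phiV N (tau N w))) with hjq
  have hc : Commute (prP N w) jq⁻¹ := ((jQ_central N _ (prP N w)).inv_left).symm
  rw [Theta_psiM, mul_inv_rev, ← hjq, ← mul_assoc, hc.eq, mul_assoc, map_mul, map_inv]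

lemma sigma_diff_mem (w : FreeGroup ι) : w * (sigma N (piN N w))⁻¹ ∈ N := by
  apply mem_of_pi_eq_one
  rw [map_mul, map_inv, sigma_spec]
  group

lemma cTilde_val_central (w : FreeGroup ι) (p : PN N) :
    Commute (prP N w * (Theta N (psiM N w))⁻¹) p := by
  rw [cTilde_val]
  exact Commute.mul_left ((jQ_central N _ p).inv_left) (prP_central N (sigma_diff_mem N w) p)

/-- The difference homomorphism `c̃ : F → P`. -/
def cTilde : FreeGroup ι →* PN N :=
  MonoidHom.mk' (fun w => prP N w * (Theta N (psiM N w))⁻¹)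
    (by
      intro u v
      have huv := cTilde_val_central N v (Theta N (psiM N u))⁻¹
      show prP N (u * v) * (Theta N (psiM N (u * v)))⁻¹
        = (prP N u * (Theta N (psiM N u))⁻¹) * (prP N v * (Theta N (psiM N v))⁻¹)
      rw [map_mul, map_mul, map_mul, mul_inv_rev]
      calc prP N u * prP N v * ((Theta N (psiM N v))⁻¹ * (Theta N (psiM N u))⁻¹)
          = prP N u * ((prP N v * (Theta N (psiM N v))⁻¹) * (Theta N (psiM N u))⁻¹) := by
            rw [mul_assoc, ← mul_assoc (prP N v)]
        _ = prP N u * ((Theta N (psiM N u))⁻¹ * (prP N v * (Theta N (psiM N v))⁻¹)) := by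
            rw [huv.eq]
        _ = (prP N u * (Theta N (psiM N u))⁻¹) * (prP N v * (Theta N (psiM N v))⁻¹) := by
            rw [mul_assoc])

lemma cTilde_apply (w : FreeGroup ι) :
    cTilde N w = prP N w * (Theta N (psiM N w))⁻¹ := rfl

/-- Key identity: `φ(τ(r)) = [r]` for `r ∈ N ≤ [F,F]`. -/
lemma phiV_tau (hN : N ≤ commutator (FreeGroup ι)) {r : FreeGroup ι} (hr : r ∈ N) :
    phiV N (tau N r) = Additive.ofMul (QuotientGroup.mk (⟨r, hr⟩ : N) : QN N) := by
  have hker : commutator (FreeGroup ι) ≤ (cTilde N).ker := by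
    rw [commutator, Subgroup.commutator_le]
    intro a _ b _
    rw [MonoidHom.mem_ker, map_commutatorElement, commutatorElement_eq_one_iff_mul_comm]
    exact (cTilde_val_central N a _).eq
  have h1 : cTilde N r = 1 := hker (hN hr)
  rw [cTilde_apply, Theta_psiM, pi_eq_one_of_mem N hr, sigma_one, map_one, one_mul,
    mul_inv_eq_one] at h1
  have h2 : jQ N (Additive.toMul (phiV N (tau N r))) = jQ N (QuotientGroup.mk ⟨r, hr⟩) := by
    rw [jQ_mk]
    exact h1.symm
  have h3 := jQ_inj N h2
  simpa using congrArg Additive.ofMul h3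


lemma tau_fsig_identity (a b : FreeGroup ι ⧸ N) :
    B a b = tau N (fsig N a b) + B 1 1 + tau N (sigma N (a * b))
      - tau N (sigma N a) - tau N (sigma N b) := by
  have h1 : tau N (sigma N a * sigma N b)
      = tau N (sigma N a) + tau N (sigma N b) + B a b := by
    rw [tau_mul, sigma_spec, sigma_spec]
  have h2 : tau N (sigma N a * sigma N b)
      = tau N (fsig N a b) + tau N (sigma N (a * b)) + B 1 1 := by
    rw [← fsig_mul_sigma N a b, tau_mul, pi_eq_one_of_mem N (fsig_mem N a b), B_one_left]
  have := h1.symm.trans h2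
  -- tau σa + tau σb + B a b = tau fsig + tau σ(ab) + B11
  have h3 : B a b = tau N (fsig N a b) + tau N (sigma N (a * b)) + B 1 1
      - tau N (sigma N a) - tau N (sigma N b) := by
    rw [← this]; abel
  rw [h3]; abel

/-- `L_ρ : C₂ → V`. -/
def Lrho : ((Fin 2 → FreeGroup ι ⧸ N) →₀ ℤ) →ₗ[ℤ] BarV (FreeGroup ι ⧸ N) :=
  Finsupp.lift _ ℤ _ fun g => tau N (fsig N (g 0) (g 1)) + B 1 1

/-- `L_k : C₁ → V`. -/
def Lk : ((Fin 1 → FreeGroup ι ⧸ N) →₀ ℤ) →ₗ[ℤ] BarV (FreeGroup ι ⧸ N) :=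
  Finsupp.lift _ ℤ _ fun g => tau N (sigma N (g 0))

lemma mkQ_eq_Lrho_sub :
    (LinearMap.range (barD3 (FreeGroup ι ⧸ N))).mkQ
      = Lrho N - (Lk N).comp (barD2 (FreeGroup ι ⧸ N)) := by
  apply Finsupp.lhom_ext
  intro a b
  have hb : (Finsupp.single a b : (Fin 2 → FreeGroup ι ⧸ N) →₀ ℤ) = b • Finsupp.single a 1 := by
    rw [Finsupp.smul_single, smul_eq_mul, mul_one]
  rw [hb, map_smul, map_smul]
  congr 1
  -- at single a 1
  have ha : a = ![a 0, a 1] := vec2_eta _ a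
  rw [LinearMap.sub_apply, LinearMap.comp_apply, barD2_single, map_add, map_sub]
  rw [Lrho, lift_single_one]
  rw [Lk, lift_single_one, lift_single_one, lift_single_one]
  simp only [Matrix.cons_val_zero, Matrix.cons_val_one, Matrix.head_cons]
  have hmk : (LinearMap.range (barD3 (FreeGroup ι ⧸ N))).mkQ (Finsupp.single a 1)
      = B (a 0) (a 1) := by
    rw [B]
    conv_lhs => rw [ha]
    rfl
  rw [hmk, tau_fsig_identity N (a 0) (a 1)]
  abel

/-- The subgroup of `V` of elements of the form `τ(r) + B 1 1`, `r ∈ N`. -/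
def Psub : AddSubgroup (BarV (FreeGroup ι ⧸ N)) where
  carrier := {v | ∃ r : N, tau N r.1 + B 1 1 = v}
  zero_mem' := ⟨1, by
    show tau N ((1 : N) : FreeGroup ι) + B 1 1 = 0
    rw [OneMemClass.coe_one, tau_one]; abel⟩
  add_mem' := by
    rintro x y ⟨r, rfl⟩ ⟨s, rfl⟩
    refine ⟨r * s, ?_⟩
    show tau N (r.1 * s.1) + B 1 1 = (tau N r.1 + B 1 1) + (tau N s.1 + B 1 1)
    rw [tau_mul, pi_eq_one_of_mem N r.2, pi_eq_one_of_mem N s.2, B_one_left]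
    abel
  neg_mem' := by
    rintro x ⟨r, rfl⟩
    refine ⟨r⁻¹, ?_⟩
    show tau N (r.1⁻¹) + B 1 1 = -(tau N r.1 + B 1 1)
    rw [tau_inv, pi_eq_one_of_mem N r.2, inv_one, B_one_left]
    abel

lemma mem_Psub {v : BarV (FreeGroup ι ⧸ N)} :
    v ∈ Psub N ↔ ∃ r : N, tau N r.1 + B 1 1 = v := Iff.rfl

lemma Lrho_mem (x : (Fin 2 → FreeGroup ι ⧸ N) →₀ ℤ) : Lrho N x ∈ Psub N := by
  induction x using Finsupp.induction with
  | zero => rw [map_zero]; exact (Psub N).zero_mem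
  | single_add a b f _ _ ih =>
      rw [map_add]
      refine AddSubgroup.add_mem _ ?_ ih
      have hb : (Finsupp.single a b : (Fin 2 → FreeGroup ι ⧸ N) →₀ ℤ) = b • Finsupp.single a 1 := by
        rw [Finsupp.smul_single, smul_eq_mul, mul_one]
      rw [hb, map_smul, Lrho, lift_single_one]
      refine AddSubgroup.zsmul_mem _ ((mem_Psub N).2 ⟨⟨fsig N (a 0) (a 1), fsig_mem N _ _⟩, rfl⟩) b

/-- Every 2-cycle class is `τ(r) + B 1 1` for some `r ∈ N`. -/
lemma cycle_eq_tau {v : BarV (FreeGroup ι ⧸ N)} (hv : Dbar (FreeGroup ι ⧸ N) v = 0) :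
    ∃ r : N, tau N r.1 + B 1 1 = v := by
  obtain ⟨z, rfl⟩ := Submodule.mkQ_surjective _ v
  have hz : barD2 (FreeGroup ι ⧸ N) z = 0 := hv
  have := DFunLike.congr_fun (mkQ_eq_Lrho_sub N) z
  rw [LinearMap.sub_apply, LinearMap.comp_apply, hz, map_zero, sub_zero] at this
  rw [this]
  exact (mem_Psub N).1 (Lrho_mem N z)


/-- Comparison map from 2-cycles to `ker D̄`. -/
def ell : LinearMap.ker (barD2 (FreeGroup ι ⧸ N)) →ₗ[ℤ] LinearMap.ker (Dbar (FreeGroup ι ⧸ N)) :=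
  LinearMap.codRestrict _
    ((LinearMap.range (barD3 (FreeGroup ι ⧸ N))).mkQ.comp
      (LinearMap.ker (barD2 (FreeGroup ι ⧸ N))).subtype)
    fun x => by
      rw [LinearMap.mem_ker]
      show Dbar (FreeGroup ι ⧸ N) (Submodule.Quotient.mk x.1) = 0
      rw [Dbar_mk]
      exact x.2

lemma ker_ell : LinearMap.ker (ell N)
    = (LinearMap.range (barD3 (FreeGroup ι ⧸ N))).comap
        (LinearMap.ker (barD2 (FreeGroup ι ⧸ N))).subtype := by
  ext x
  simp only [LinearMap.mem_ker, Submodule.mem_comap, Subtype.ext_iff]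
  show (Submodule.Quotient.mk x.1 : BarV (FreeGroup ι ⧸ N)) = 0 ↔ _
  rw [Submodule.Quotient.mk_eq_zero]
  rfl

lemma ell_surj : Function.Surjective (ell N) := by
  rintro ⟨v, hv⟩
  rw [LinearMap.mem_ker] at hv
  obtain ⟨z, rfl⟩ := Submodule.mkQ_surjective _ v
  have hz : barD2 (FreeGroup ι ⧸ N) z = 0 := by rw [← Dbar_mk]; exact hv
  exact ⟨⟨z, hz⟩, Subtype.ext rfl⟩

/-- `barH2 ≃ ker D̄`. -/
def e1 : barH2 (FreeGroup ι ⧸ N) ≃ₗ[ℤ] LinearMap.ker (Dbar (FreeGroup ι ⧸ N)) :=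
  (Submodule.quotEquivOfEq _ _ (ker_ell N).symm).trans
    ((ell N).quotKerEquivOfSurjective (ell_surj N))

/-- `ρ : N → ker D̄`. -/
def rho0 (hN : N ≤ commutator (FreeGroup ι)) :
    N →* Multiplicative (LinearMap.ker (Dbar (FreeGroup ι ⧸ N))) :=
  MonoidHom.mk' (fun r => Multiplicative.ofAdd
      (⟨tau N r.1 + B 1 1, by rw [LinearMap.mem_ker]; exact Dbar_cycle N (hN r.2) r.2⟩ :
        LinearMap.ker (Dbar (FreeGroup ι ⧸ N))))
    (fun r s => by
      have h : tau N ((r * s).1) + B 1 1 = (tau N r.1 + B 1 1) + (tau N s.1 + B 1 1) := by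
        show tau N (r.1 * s.1) + B 1 1 = _
        rw [tau_mul, pi_eq_one_of_mem N r.2, pi_eq_one_of_mem N s.2, B_one_left]
        abel
      exact congrArg Multiplicative.ofAdd (Subtype.ext h))

/-- `ρ` descended to `Q`. -/
def rhoQ (hN : N ≤ commutator (FreeGroup ι)) :
    QN N →* Multiplicative (LinearMap.ker (Dbar (FreeGroup ι ⧸ N))) :=
  QuotientGroup.lift _ (rho0 N hN) (fun x hx => by
    have hxK : x.1 ∈ ⁅N, (⊤ : Subgroup (FreeGroup ι))⁆ := Subgroup.mem_subgroupOf.1 hx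
    apply Multiplicative.toAdd.injective
    apply Subtype.ext
    show tau N x.1 + B 1 1 = 0
    rw [tau_of_mem_K N hxK]
    abel)

theorem hopf_aux (hN : N ≤ commutator (FreeGroup ι)) :
    Nonempty (barH2 (FreeGroup ι ⧸ N) ≃+ Additive (QN N)) := by
  let f : Additive (QN N) →+ LinearMap.ker (Dbar (FreeGroup ι ⧸ N)) :=
    AddMonoidHom.mk' (fun a => Multiplicative.toAdd (rhoQ N hN (Additive.toMul a)))
      (fun a b => by
        show Multiplicative.toAdd (rhoQ N hN (Additive.toMul a * Additive.toMul b)) = _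
        rw [map_mul]
        rfl)
  have hf : ∀ r : N, ((f (Additive.ofMul (QuotientGroup.mk r : QN N))) :
      LinearMap.ker (Dbar (FreeGroup ι ⧸ N))).1 = tau N r.1 + B 1 1 := fun r => rfl
  have hleft : ∀ a : Additive (QN N), phiV N ((f a).1) = a := by
    intro a
    obtain ⟨r, hr⟩ := QuotientGroup.mk_surjective (Additive.toMul a)
    have ha : a = Additive.ofMul (QuotientGroup.mk r : QN N) := by
      rw [hr]
      simp
    rw [ha, hf r, map_add, phiV_B11, add_zero]
    exact phiV_tau N hN r.2
  have hinj : Function.Injective f := by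
    intro a b hab
    have := congrArg (fun x : LinearMap.ker (Dbar (FreeGroup ι ⧸ N)) => phiV N x.1) hab
    simpa [hleft a, hleft b] using this
  have hsurj : Function.Surjective f := by
    rintro ⟨v, hv⟩
    rw [LinearMap.mem_ker] at hv
    obtain ⟨r, hr⟩ := cycle_eq_tau N hv
    exact ⟨Additive.ofMul (QuotientGroup.mk r : QN N), Subtype.ext (by rw [hf r]; exact hr)⟩
  exact ⟨((e1 N).toAddEquiv).trans (AddEquiv.ofBijective f ⟨hinj, hsurj⟩).symm⟩

end Free

end Hopf

/-- Theorem 2.3(I) / Hopf's formula for `R = F_h`: for the free group `F` on `q` generators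
and `h ≥ 2`, the second group homology of the free nilpotent group `F/F_h` with trivial
coefficients `ℤ` is isomorphic, as an abelian group, to the lower central series quotient
`F_h/F_{h+1}` (paper indexing `F_m = lowerCentralSeries F (m-1)`). -/
theorem H2_free_nilpotent_iso_lcs_quotient (q h : ℕ) (hh : 2 ≤ h) :
    Nonempty
      (barH2 (FreeGroup (Fin q) ⧸ (⊤ : Subgroup (FreeGroup (Fin q))).lowerCentralSeries (h - 1)) ≃+
        Additive
          ((⊤ : Subgroup (FreeGroup (Fin q))).lowerCentralSeries (h - 1) ⧸
            (((⊤ : Subgroup (FreeGroup (Fin q))).lowerCentralSeries h).subgroupOf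
              ((⊤ : Subgroup (FreeGroup (Fin q))).lowerCentralSeries (h - 1))))) := by
  obtain ⟨n, rfl⟩ : ∃ n, h = n + 1 := ⟨h - 1, by omega⟩
  have h1 : 1 ≤ n := by omega
  rw [show n + 1 - 1 = n from rfl]
  have hsucc : (⊤ : Subgroup (FreeGroup (Fin q))).lowerCentralSeries (n + 1)
      = ⁅(⊤ : Subgroup (FreeGroup (Fin q))).lowerCentralSeries n, (⊤ : Subgroup (FreeGroup (Fin q)))⁆ := by
    exact Subgroup.lowerCentralSeries_succ _ n
  obtain ⟨e⟩ := Hopf.hopf_aux ((⊤ : Subgroup (FreeGroup (Fin q))).lowerCentralSeries n)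
    (le_trans (Subgroup.lowerCentralSeries_antitone _ h1) (le_of_eq Subgroup.top_lowerCentralSeries_one))
  have heq : ((⊤ : Subgroup (FreeGroup (Fin q))).lowerCentralSeries (n + 1)).subgroupOf
        ((⊤ : Subgroup (FreeGroup (Fin q))).lowerCentralSeries n)
      = (⁅(⊤ : Subgroup (FreeGroup (Fin q))).lowerCentralSeries n,
          (⊤ : Subgroup (FreeGroup (Fin q)))⁆).subgroupOf
        ((⊤ : Subgroup (FreeGroup (Fin q))).lowerCentralSeries n) := by rw [hsucc]
  exact ⟨e.trans (MulEquiv.toAdditive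
    (QuotientGroup.quotientMulEquivOfEq heq)).symm⟩
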